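/- Let m ≥ 1, n ≥ 1 and let i : ℤ/(2m) → {1,…,n} be such that the cardinality of the range of i equals m + 1 and the number of distinct unordered pairs {i(j), i(j+1)} for j ∈ ℤ/(2m) equals m. Then every directed edge of the walk appears together with its reversal: for every j ∈ ℤ/(2m), the number of j' ∈ ℤ/(2m) with (i(j'), i(j'+1)) = (i(j), i(j+1)) equals 1, and the number of j' ∈ ℤ/(2m) with (i(j'), i(j'+1)) = (i(j+1), i(j)) equals 1; in particular i(j) ≠ i(j+1) for all j. -/

import Mathlib

open Finset SimpleGraph

/-- In a cyclic sequence, the number of "down-crossings" equals the number of "up-crossings". -/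
private lemma cyclic_cross {N : ℕ} [NeZero N] (g : ZMod N → Prop) [DecidablePred g] :
    (Finset.univ.filter (fun j => g j ∧ ¬ g (j+1))).card
      = (Finset.univ.filter (fun j => ¬ g j ∧ g (j+1))).card := by
  classical
  have hshift : (Finset.univ.filter (fun j : ZMod N => g (j+1))).card
      = (Finset.univ.filter g).card := by
    apply Finset.card_bij (fun j _ => j + 1)
    · intro a ha; simp only [mem_filter, mem_univ, true_and] at ha ⊢; exact ha
    · intro a _ b _ h; exact add_right_cancel h
    · intro b hb
      refine ⟨b - 1, ?_, by ring⟩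
      simp only [mem_filter, mem_univ, true_and, sub_add_cancel] at hb ⊢
      exact hb
  have h1 := Finset.card_filter_add_card_filter_not
    (s := Finset.univ.filter (g : ZMod N → Prop)) (p := fun j => g (j+1))
  have h2 := Finset.card_filter_add_card_filter_not
    (s := Finset.univ.filter (fun j : ZMod N => g (j+1))) (p := fun j => g j)
  rw [Finset.filter_filter, Finset.filter_filter] at h1 h2
  have h3 : (Finset.univ.filter (fun j : ZMod N => g (j+1) ∧ g j))
      = (Finset.univ.filter (fun j : ZMod N => g j ∧ g (j+1))) := by
    apply Finset.filter_congr; intro x _; exact and_comm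
  have h4 : (Finset.univ.filter (fun j : ZMod N => g (j+1) ∧ ¬ g j))
      = (Finset.univ.filter (fun j : ZMod N => ¬ g j ∧ g (j+1))) := by
    apply Finset.filter_congr; intro x _; exact and_comm
  rw [h3, h4, hshift] at h2
  omega

/-- A connected finite graph has at least `|V| - 1` edges. -/
private lemma conn_card_le {V : Type*} [Fintype V] [DecidableEq V]
    (G : SimpleGraph V) [DecidableRel G.Adj] (hc : G.Connected) :
    Fintype.card V ≤ G.edgeFinset.card + 1 := by
  classical
  obtain ⟨root⟩ := hc.nonempty
  have claim : ∀ v : V, ∃ x : V, v ≠ root → G.Adj v x ∧ G.dist x root < G.dist v root := by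
    intro v
    by_cases hv : v = root
    · exact ⟨root, fun h => absurd hv h⟩
    · obtain ⟨p, hp⟩ := (hc.preconnected v root).exists_walk_length_eq_dist
      cases p with
      | nil => exact absurd rfl hv
      | @cons _ x _ h q =>
        refine ⟨x, fun _ => ⟨h, ?_⟩⟩
        have hd := SimpleGraph.dist_le q
        simp only [Walk.length_cons] at hp
        omega
  choose f hf using claim
  have hmem : ∀ v ∈ Finset.univ.erase root, s(v, f v) ∈ G.edgeFinset := by
    intro v hv
    rw [Finset.mem_erase] at hv
    exact SimpleGraph.mem_edgeFinset.mpr ((hf v hv.1).1)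
  have hinj : Set.InjOn (fun v => s(v, f v)) (Finset.univ.erase root) := by
    intro a ha b hb hEq
    simp only [Finset.mem_coe, Finset.mem_erase] at ha hb
    simp only at hEq
    have la := (hf a ha.1).2
    have lb := (hf b hb.1).2
    rw [Sym2.eq_iff] at hEq
    rcases hEq with ⟨h1, _⟩ | ⟨h1, h2⟩
    · exact h1
    · subst h1
      rw [h2] at la
      omega
  have hcard := Finset.card_le_card_of_injOn _ hmem hinj
  rw [Finset.card_erase_of_mem (Finset.mem_univ root), Finset.card_univ] at hcard
  have : 1 ≤ Fintype.card V := @Fintype.card_pos _ _ ⟨root⟩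
  omega

/-- Deleting a non-bridge edge preserves connectivity. -/
private lemma delete_connected {V : Type*} (G : SimpleGraph V) (a b : V)
    (hc : G.Connected) (hr : (G.deleteEdges {s(a,b)}).Reachable a b) :
    (G.deleteEdges {s(a,b)}).Connected := by
  rw [connected_iff] at hc ⊢
  refine ⟨?_, hc.2⟩
  intro u v
  obtain ⟨p⟩ := hc.1 u v
  induction p with
  | nil => exact Reachable.refl _
  | @cons u' x' v' h q ih =>
    refine Reachable.trans ?_ ih
    by_cases he : s(u', x') = s(a, b)
    · rw [Sym2.eq_iff] at he
      rcases he with ⟨rfl, rfl⟩ | ⟨rfl, rfl⟩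
      · exact hr
      · exact hr.symm
    · exact SimpleGraph.Adj.reachable
        (SimpleGraph.deleteEdges_adj.mpr ⟨h, by simpa using he⟩)

/-- Let `m, n ≥ 1` and let `i : ℤ/(2m) → {1,…,n}` be a closed walk of double tree type
(range of cardinality `m+1` and exactly `m` distinct unordered pairs `{i(j), i(j+1)}`).
Then every directed edge of the walk appears exactly once together with its reversal
appearing exactly once; in particular `i(j) ≠ i(j+1)` for all `j`. -/
theorem stmt_17 (m n : ℕ) (hm : 1 ≤ m) (hn : 1 ≤ n) :
    letI : NeZero (2 * m) := ⟨by omega⟩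
    ∀ i : ZMod (2 * m) → Fin n,
      (Finset.univ.image i).card = m + 1 →
      (Finset.univ.image (fun j : ZMod (2 * m) => s(i j, i (j + 1)))).card = m →
      ∀ j : ZMod (2 * m),
        (Finset.univ.filter
            (fun j' : ZMod (2 * m) => (i j', i (j' + 1)) = (i j, i (j + 1)))).card = 1 ∧
        (Finset.univ.filter
            (fun j' : ZMod (2 * m) => (i j', i (j' + 1)) = (i (j + 1), i j))).card = 1 ∧
        i j ≠ i (j + 1) := by
  intro i h1 h2 j
  haveI : NeZero (2 * m) := ⟨by omega⟩
  classical
  set S : Finset (Fin n) := Finset.univ.image i with hS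
  set E : Finset (Sym2 (Fin n)) :=
    Finset.univ.image (fun j' : ZMod (2 * m) => s(i j', i (j' + 1))) with hE
  let G : SimpleGraph {x : Fin n // x ∈ S} :=
    { Adj := fun a b => a ≠ b ∧ s(a.1, b.1) ∈ E
      symm := by
        constructor
        rintro a b ⟨hne, hmem⟩
        exact ⟨hne.symm, by rwa [Sym2.eq_swap]⟩
      loopless := ⟨fun a h => h.1 rfl⟩ }
  have hGadj : ∀ a b, G.Adj a b ↔ a ≠ b ∧ s(a.1, b.1) ∈ E := fun _ _ => Iff.rfl
  let lift : ZMod (2 * m) → {x : Fin n // x ∈ S} :=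
    fun j' => ⟨i j', Finset.mem_image_of_mem i (Finset.mem_univ j')⟩
  have hadj : ∀ j' : ZMod (2 * m), i j' ≠ i (j' + 1) → G.Adj (lift j') (lift (j' + 1)) := by
    intro j' hne
    exact ⟨fun h => hne (congrArg Subtype.val h),
      Finset.mem_image_of_mem _ (Finset.mem_univ j')⟩
  -- connectivity
  have hreach : ∀ j₁ j₂ : ZMod (2 * m), G.Reachable (lift j₁) (lift j₂) := by
    have base : ∀ k : ℕ, G.Reachable (lift 0) (lift (k : ZMod (2 * m))) := by
      intro k
      induction k with
      | zero => rw [Nat.cast_zero]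
      | succ k ih =>
        have hc : ((k + 1 : ℕ) : ZMod (2 * m)) = (k : ZMod (2 * m)) + 1 := by push_cast; ring
        rw [hc]
        refine ih.trans ?_
        by_cases hne : i ((k : ZMod (2 * m))) = i ((k : ZMod (2 * m)) + 1)
        · have : lift ((k : ZMod (2 * m))) = lift ((k : ZMod (2 * m)) + 1) := Subtype.ext hne
          rw [this]
        · exact (hadj _ hne).reachable
    intro j₁ j₂
    have r1 := base j₁.val
    have r2 := base j₂.val
    rw [ZMod.natCast_rightInverse j₁] at r1
    rw [ZMod.natCast_rightInverse j₂] at r2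
    exact r1.symm.trans r2
  have hconn : G.Connected := by
    rw [connected_iff]
    refine ⟨?_, ⟨lift j⟩⟩
    rintro ⟨a, ha⟩ ⟨b, hb⟩
    obtain ⟨ja, -, rfl⟩ := Finset.mem_image.mp ha
    obtain ⟨jb, -, rfl⟩ := Finset.mem_image.mp hb
    exact hreach ja jb
  -- edge counting
  have hScard : Fintype.card {x : Fin n // x ∈ S} = m + 1 := by
    rw [Fintype.card_coe, h1]
  have hle1 : Fintype.card {x : Fin n // x ∈ S} ≤ G.edgeFinset.card + 1 :=
    conn_card_le G hconn
  have hFinj : Function.Injective (Sym2.map (Subtype.val : {x : Fin n // x ∈ S} → Fin n)) :=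
    Sym2.map.injective Subtype.val_injective
  have hmemF : ∀ p ∈ G.edgeFinset,
      Sym2.map Subtype.val p ∈ E.filter (fun q => ¬ q.IsDiag) := by
    intro p hp
    induction p using Sym2.ind with
    | _ a b =>
      rw [SimpleGraph.mem_edgeFinset, SimpleGraph.mem_edgeSet] at hp
      rw [Sym2.map_pair_eq, Finset.mem_filter]
      exact ⟨hp.2, by
        rw [Sym2.mk_isDiag_iff]
        exact fun h => hp.1 (Subtype.ext h)⟩
  have hle2 : G.edgeFinset.card ≤ (E.filter (fun q => ¬ q.IsDiag)).card :=
    Finset.card_le_card_of_injOn _ hmemF (hFinj.injOn)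
  have hle3 : (E.filter (fun q => ¬ q.IsDiag)).card ≤ E.card :=
    Finset.card_le_card (Finset.filter_subset _ _)
  have hedges : G.edgeFinset.card = m := by omega
  have hfilter : E.filter (fun q => ¬ q.IsDiag) = E :=
    Finset.eq_of_subset_of_card_le (Finset.filter_subset _ _) (by omega)
  have hnoloop : ∀ j' : ZMod (2 * m), i j' ≠ i (j' + 1) := by
    intro j' hEq
    have hmem : s(i j', i (j' + 1)) ∈ E := Finset.mem_image_of_mem _ (Finset.mem_univ j')
    rw [← hfilter, Finset.mem_filter] at hmem
    exact hmem.2 (Sym2.mk_isDiag_iff.mpr hEq)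
  -- every edge is a bridge
  have hbridge : ∀ a b, G.Adj a b → ¬ (G.deleteEdges {s(a, b)}).Reachable a b := by
    intro a b hab hr
    have hconn' := delete_connected G a b hconn hr
    have h' := conn_card_le (G.deleteEdges {s(a, b)}) hconn'
    have hdel : (G.deleteEdges (↑({s(a, b)} : Finset (Sym2 {x : Fin n // x ∈ S})))).edgeFinset
        = G.edgeFinset \ {s(a, b)} := SimpleGraph.edgeFinset_deleteEdges (G := G) {s(a, b)}
    replace hdel : (G.deleteEdges {s(a, b)}).edgeFinset = G.edgeFinset \ {s(a, b)} := by
      ext x; simp [SimpleGraph.mem_edgeFinset]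
    rw [hdel] at h'
    have hin : s(a, b) ∈ G.edgeFinset := SimpleGraph.mem_edgeFinset.mpr hab
    rw [Finset.card_sdiff_of_subset (Finset.singleton_subset_iff.mpr hin), Finset.card_singleton,
      hedges] at h'
    omega
  -- key per-index analysis
  have key : ∀ j0 : ZMod (2 * m),
      (Finset.univ.filter
          (fun j' : ZMod (2 * m) => (i j', i (j' + 1)) = (i j0, i (j0 + 1)))).card
        = (Finset.univ.filter
            (fun j' : ZMod (2 * m) => (i j', i (j' + 1)) = (i (j0 + 1), i j0))).card ∧
      1 ≤ (Finset.univ.filter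
            (fun j' : ZMod (2 * m) => (i j', i (j' + 1)) = (i j0, i (j0 + 1)))).card ∧
      (Finset.univ.filter
          (fun j' : ZMod (2 * m) => s(i j', i (j' + 1)) = s(i j0, i (j0 + 1)))).card
        = (Finset.univ.filter
            (fun j' : ZMod (2 * m) => (i j', i (j' + 1)) = (i j0, i (j0 + 1)))).card
          + (Finset.univ.filter
              (fun j' : ZMod (2 * m) => (i j', i (j' + 1)) = (i (j0 + 1), i j0))).card := by
    intro j0
    have hab : i j0 ≠ i (j0 + 1) := hnoloop j0
    have hAdj : G.Adj (lift j0) (lift (j0 + 1)) := hadj j0 hab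
    have hbr := hbridge _ _ hAdj
    set G' := G.deleteEdges {s(lift j0, lift (j0 + 1))} with hG'
    set g : ZMod (2 * m) → Prop := fun j' => G'.Reachable (lift j0) (lift j') with hg
    have hchar1 : ∀ j' : ZMod (2 * m),
        (i j', i (j' + 1)) = (i j0, i (j0 + 1)) ↔ (g j' ∧ ¬ g (j' + 1)) := by
      intro j'
      by_cases hP1 : (i j', i (j' + 1)) = (i j0, i (j0 + 1))
      · rw [Prod.mk.injEq] at hP1
        have l1 : lift j' = lift j0 := Subtype.ext hP1.1
        have l2 : lift (j' + 1) = lift (j0 + 1) := Subtype.ext hP1.2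
        simp only [hg, l1, l2]
        exact iff_of_true (Prod.ext hP1.1 hP1.2) ⟨Reachable.refl _, hbr⟩
      · simp only [hP1, false_iff]
        by_cases hP2 : (i j', i (j' + 1)) = (i (j0 + 1), i j0)
        · rw [Prod.mk.injEq] at hP2
          have l1 : lift j' = lift (j0 + 1) := Subtype.ext hP2.1
          simp only [hg, l1]
          exact fun h => hbr h.1
        · -- neither direction: step is a different edge, survives deletion
          have hne' : i j' ≠ i (j' + 1) := hnoloop j'
          have hAdj' : G'.Adj (lift j') (lift (j' + 1)) := by
            rw [hG', SimpleGraph.deleteEdges_adj]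
            refine ⟨hadj j' hne', ?_⟩
            rw [Set.mem_singleton_iff, Sym2.eq_iff]
            rintro (⟨e1, e2⟩ | ⟨e1, e2⟩)
            · exact hP1 (Prod.ext (congrArg Subtype.val e1) (congrArg Subtype.val e2))
            · exact hP2 (Prod.ext (congrArg Subtype.val e1) (congrArg Subtype.val e2))
          rintro ⟨hg1, hg2⟩
          exact hg2 (hg1.trans hAdj'.reachable)
    have hchar2 : ∀ j' : ZMod (2 * m),
        (i j', i (j' + 1)) = (i (j0 + 1), i j0) ↔ (¬ g j' ∧ g (j' + 1)) := by
      intro j'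
      by_cases hP2 : (i j', i (j' + 1)) = (i (j0 + 1), i j0)
      · rw [Prod.mk.injEq] at hP2
        have l1 : lift j' = lift (j0 + 1) := Subtype.ext hP2.1
        have l2 : lift (j' + 1) = lift j0 := Subtype.ext hP2.2
        simp only [hg, l1, l2]
        exact iff_of_true (Prod.ext hP2.1 hP2.2) ⟨hbr, Reachable.refl _⟩
      · simp only [hP2, false_iff]
        by_cases hP1 : (i j', i (j' + 1)) = (i j0, i (j0 + 1))
        · rw [Prod.mk.injEq] at hP1
          have l2 : lift (j' + 1) = lift (j0 + 1) := Subtype.ext hP1.2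
          simp only [hg, l2]
          exact fun h => hbr h.2
        · have hne' : i j' ≠ i (j' + 1) := hnoloop j'
          have hAdj' : G'.Adj (lift j') (lift (j' + 1)) := by
            rw [hG', SimpleGraph.deleteEdges_adj]
            refine ⟨hadj j' hne', ?_⟩
            rw [Set.mem_singleton_iff, Sym2.eq_iff]
            rintro (⟨e1, e2⟩ | ⟨e1, e2⟩)
            · exact hP1 (Prod.ext (congrArg Subtype.val e1) (congrArg Subtype.val e2))
            · exact hP2 (Prod.ext (congrArg Subtype.val e1) (congrArg Subtype.val e2))
          rintro ⟨hg1, hg2⟩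
          exact hg1 (hg2.trans hAdj'.symm.reachable)
    have hf1 : (Finset.univ.filter
          (fun j' : ZMod (2 * m) => (i j', i (j' + 1)) = (i j0, i (j0 + 1))))
        = (Finset.univ.filter (fun j' : ZMod (2 * m) => g j' ∧ ¬ g (j' + 1))) :=
      Finset.filter_congr (fun x _ => hchar1 x)
    have hf2 : (Finset.univ.filter
          (fun j' : ZMod (2 * m) => (i j', i (j' + 1)) = (i (j0 + 1), i j0)))
        = (Finset.univ.filter (fun j' : ZMod (2 * m) => ¬ g j' ∧ g (j' + 1))) :=
      Finset.filter_congr (fun x _ => hchar2 x)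
    refine ⟨by rw [hf1, hf2]; exact cyclic_cross g, ?_, ?_⟩
    · refine Finset.card_pos.mpr ⟨j0, ?_⟩
      rw [Finset.mem_filter]
      exact ⟨Finset.mem_univ _, rfl⟩
    · have hsplit : ∀ j' : ZMod (2 * m),
          s(i j', i (j' + 1)) = s(i j0, i (j0 + 1))
            ↔ ((i j', i (j' + 1)) = (i j0, i (j0 + 1))
              ∨ (i j', i (j' + 1)) = (i (j0 + 1), i j0)) := by
        intro j'
        rw [Sym2.eq_iff, Prod.mk.injEq, Prod.mk.injEq]
      rw [Finset.filter_congr (fun x (_ : x ∈ Finset.univ) => hsplit x), Finset.filter_or]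
      apply Finset.card_union_of_disjoint
      rw [Finset.disjoint_left]
      intro x hx1 hx2
      rw [Finset.mem_filter, Prod.mk.injEq] at hx1 hx2
      exact hab (hx1.2.1.symm.trans hx2.2.1)
  -- global counting
  have hsum : (Finset.univ : Finset (ZMod (2 * m))).card
      = ∑ p ∈ E, (Finset.univ.filter
          (fun j' : ZMod (2 * m) => s(i j', i (j' + 1)) = p)).card :=
    Finset.card_eq_sum_card_fiberwise
      (fun x _ => Finset.mem_image_of_mem _ (Finset.mem_univ x))
  have hcardu : (Finset.univ : Finset (ZMod (2 * m))).card = 2 * m := by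
    rw [Finset.card_univ, ZMod.card]
  obtain ⟨k1, k2, k3⟩ := key j
  have hjE : s(i j, i (j + 1)) ∈ E := Finset.mem_image_of_mem _ (Finset.mem_univ j)
  have hub : (Finset.univ.filter
      (fun j' : ZMod (2 * m) => s(i j', i (j' + 1)) = s(i j, i (j + 1)))).card ≤ 2 := by
    by_contra hgt
    push_neg at hgt
    have hlt : ∑ p ∈ E, 2 < ∑ p ∈ E, (Finset.univ.filter
        (fun j' : ZMod (2 * m) => s(i j', i (j' + 1)) = p)).card := by
      refine Finset.sum_lt_sum ?_ ⟨s(i j, i (j + 1)), hjE, hgt⟩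
      intro p hp
      obtain ⟨j0, -, rfl⟩ := Finset.mem_image.mp hp
      obtain ⟨l1, l2, l3⟩ := key j0
      omega
    rw [Finset.sum_const, h2, smul_eq_mul] at hlt
    omega
  exact ⟨by omega, by omega, hnoloop j⟩
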